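/- For positive definite n×n matrices σ and ρ, the LogDet divergence D_ℓD(σ‖ρ) = tr(ρ⁻¹σ) − log det(ρ⁻¹σ) − n is nonnegative, and it is zero if and only if σ = ρ. -/

import Mathlib

open Matrix

private lemma aux_posDef_conj {n : ℕ} {A B : Matrix (Fin n) (Fin n) ℝ}
    (hA : A.PosDef) (hB : B.IsHermitian) (hBdet : B.det ≠ 0) : (B * A * B).PosDef := by
  have hBu : IsUnit B := (Matrix.isUnit_iff_isUnit_det _).2 hBdet.isUnit
  refine Matrix.PosDef.of_dotProduct_mulVec_pos ?_ (fun x hx => ?_)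
  · show (B * A * B)ᴴ = B * A * B
    rw [conjTranspose_mul, conjTranspose_mul, hA.1.eq, hB.eq, mul_assoc]
  · have hBx : B *ᵥ x ≠ 0 := by
      intro h
      exact hx ((Matrix.mulVec_injective_iff_isUnit.mpr hBu).eq_iff' (by simp) |>.1 h)
    have key : star x ⬝ᵥ ((B * A * B) *ᵥ x) = star (B *ᵥ x) ⬝ᵥ (A *ᵥ (B *ᵥ x)) := by
      rw [star_mulVec, hB.eq, mul_assoc, ← mulVec_mulVec, dotProduct_mulVec, mulVec_mulVec]
    rw [key]
    exact hA.dotProduct_mulVec_pos hBx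

private lemma aux_trace_eq_sum {n : ℕ} {A : Matrix (Fin n) (Fin n) ℝ}
    (hA : A.IsHermitian) : A.trace = ∑ i, hA.eigenvalues i := by
  conv_lhs => rw [hA.spectral_theorem, Unitary.conjStarAlgAut_apply]
  rw [Matrix.trace_mul_comm, ← mul_assoc,
    (Matrix.mem_unitaryGroup_iff').mp (hA.eigenvectorUnitary).2, one_mul, trace_diagonal]
  rfl

private lemma aux_key {n : ℕ} {S : Matrix (Fin n) (Fin n) ℝ} (hS : S.PosDef) :
    0 ≤ S.trace - Real.log S.det - n ∧
    (S.trace - Real.log S.det - n = 0 ↔ S = 1) := by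
  have hev : ∀ i, 0 < hS.1.eigenvalues i := hS.eigenvalues_pos
  have hdet : S.det = ∏ i, hS.1.eigenvalues i := by
    rw [hS.1.det_eq_prod_eigenvalues]; rfl
  have hlog : Real.log S.det = ∑ i, Real.log (hS.1.eigenvalues i) := by
    rw [hdet, Real.log_prod (fun i _ => (hev i).ne')]
  have hExpr : S.trace - Real.log S.det - n
      = ∑ i, (hS.1.eigenvalues i - Real.log (hS.1.eigenvalues i) - 1) := by
    rw [aux_trace_eq_sum hS.1, hlog]
    simp [Finset.sum_sub_distrib]
  have hterm : ∀ i ∈ Finset.univ, (0:ℝ) ≤ hS.1.eigenvalues i - Real.log (hS.1.eigenvalues i) - 1 :=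
    fun i _ => by have := Real.log_le_sub_one_of_pos (hev i); linarith
  constructor
  · rw [hExpr]; exact Finset.sum_nonneg hterm
  constructor
  · intro h
    rw [hExpr] at h
    have hall := (Finset.sum_eq_zero_iff_of_nonneg hterm).1 h
    have hev1 : ∀ i, hS.1.eigenvalues i = 1 := by
      intro i
      by_contra hne
      have := Real.log_lt_sub_one_of_pos (hev i) hne
      have := hall i (Finset.mem_univ i)
      linarith
    have hfun : RCLike.ofReal ∘ hS.1.eigenvalues = fun _ => (1:ℝ) :=
      funext fun i => by simp [hev1 i]
    have hdiag : Matrix.diagonal (RCLike.ofReal ∘ hS.1.eigenvalues) = (1 : Matrix (Fin n) (Fin n) ℝ) := by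
      rw [hfun]
      exact Matrix.diagonal_one
    conv_lhs => rw [hS.1.spectral_theorem, Unitary.conjStarAlgAut_apply]
    rw [hdiag, mul_one, (Matrix.mem_unitaryGroup_iff).mp (hS.1.eigenvectorUnitary).2]
  · rintro rfl
    simp [Matrix.trace_one]

/-- For positive definite `n×n` matrices `σ` and `ρ`, the LogDet divergence
`D_ℓD(σ‖ρ) = tr(ρ⁻¹σ) − log det(ρ⁻¹σ) − n` is nonnegative, with equality iff `σ = ρ`. -/
theorem logDet_divergence_nonneg_eq_zero_iff {n : ℕ}
    (σ ρ : Matrix (Fin n) (Fin n) ℝ) (hσ : σ.PosDef) (hρ : ρ.PosDef) :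
    0 ≤ Matrix.trace (ρ⁻¹ * σ) - Real.log (Matrix.det (ρ⁻¹ * σ)) - n ∧
    (Matrix.trace (ρ⁻¹ * σ) - Real.log (Matrix.det (ρ⁻¹ * σ)) - n = 0 ↔ σ = ρ) := by
  open scoped MatrixOrder in
  set s := CFC.sqrt σ with hs_def
  open scoped MatrixOrder in
  have hs_herm : s.IsHermitian := (Matrix.nonneg_iff_posSemidef.mp (CFC.sqrt_nonneg σ)).1
  open scoped MatrixOrder in
  have hss : s * s = σ := CFC.sqrt_mul_sqrt_self σ (Matrix.nonneg_iff_posSemidef.mpr hσ.posSemidef)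
  have hσdet : σ.det ≠ 0 := hσ.det_pos.ne'
  have hρdet : ρ.det ≠ 0 := hρ.det_pos.ne'
  have hsdet : s.det ≠ 0 := by
    intro h
    apply hσdet
    rw [← hss, det_mul, h, mul_zero]
  have hS : (s * ρ⁻¹ * s).PosDef := aux_posDef_conj hρ.inv hs_herm hsdet
  have htr : Matrix.trace (ρ⁻¹ * σ) = (s * ρ⁻¹ * s).trace := by
    rw [← hss, ← mul_assoc, Matrix.trace_mul_comm, ← mul_assoc]
  have hdet : Matrix.det (ρ⁻¹ * σ) = (s * ρ⁻¹ * s).det := by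
    rw [← hss]
    simp only [det_mul]
    ring
  have hiff : s * ρ⁻¹ * s = 1 ↔ σ = ρ := by
    constructor
    · intro h
      have hρinv : ρ⁻¹ = s⁻¹ * s⁻¹ := by
        have h2 : s⁻¹ * (s * ρ⁻¹ * s) * s⁻¹ = s⁻¹ * 1 * s⁻¹ := by rw [h]
        rwa [mul_one, ← mul_assoc, ← mul_assoc, Matrix.nonsing_inv_mul _ hsdet.isUnit, one_mul,
          mul_assoc, Matrix.mul_nonsing_inv _ hsdet.isUnit, mul_one] at h2
      have : ρ = (s⁻¹ * s⁻¹)⁻¹ := by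
        rw [← hρinv, Matrix.nonsing_inv_nonsing_inv _ hρdet.isUnit]
      rw [this, Matrix.mul_inv_rev, Matrix.nonsing_inv_nonsing_inv _ hsdet.isUnit, hss]
    · rintro rfl
      rw [← hss, Matrix.mul_inv_rev, ← mul_assoc,
        Matrix.mul_nonsing_inv _ hsdet.isUnit, one_mul, Matrix.nonsing_inv_mul _ hsdet.isUnit]
  obtain ⟨h1, h2⟩ := aux_key hS
  rw [htr, hdet]
  exact ⟨h1, h2.trans hiff⟩
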